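/- Let m ≥ 2 and ℓ ∈ ℤ. Let OP_*(ℓ,m) be the chain complex whose degree-k basis consists of ordered partitions (a₁,...,a_k) of ℓ with each aᵢ ∈ {1,...,m-1}, and differential d(a₁,...,a_k) = Σ_{i=1}^{k-1} (-1)^i (a₁,...,aᵢ+aᵢ₊₁,...,a_k), omitting terms with aᵢ+aᵢ₊₁ ≥ m. Then for ℓ ≥ 2, the map φ: OP_{*-2}(ℓ-m,m) → OP_*(ℓ,m) defined by φ(a₁,...,a_k) = (1, m-1, a₁,...,a_k) is a chain map. -/

import Mathlib

open scoped Classical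

/-- Basis of `OP_k(ℓ,m)`: ordered partitions of `ℓ` into `k` parts, all in `{1,...,m-1}`. -/
def OPb (ℓ : ℤ) (m k : ℕ) : Type :=
  {l : List ℕ // l.length = k ∧ (l.sum : ℤ) = ℓ ∧ ∀ x ∈ l, 1 ≤ x ∧ x < m}

/-- The degree-`k` chain module of the complex of ordered partitions with upper bound. -/
abbrev OPMod (R : Type) [CommRing R] (ℓ : ℤ) (m k : ℕ) := OPb ℓ m k →₀ R

/-- The alternating sum of adjacent merges of a list, dropping merged entries `≥ m`. -/
noncomputable def dList (R : Type) [CommRing R] (m : ℕ) : List ℕ → (List ℕ →₀ R)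
  | [] => 0
  | [_] => 0
  | a :: b :: t =>
      (if a + b < m then -Finsupp.single ((a + b) :: t) (1 : R) else 0)
        - Finsupp.mapDomain (List.cons a) (dList R m (b :: t))

/-- Embedding of `OP_k(ℓ,m)` into the free module on all lists. -/
noncomputable def eL (R : Type) [CommRing R] (ℓ : ℤ) (m k : ℕ) :
    OPMod R ℓ m k →ₗ[R] (List ℕ →₀ R) :=
  Finsupp.lmapDomain R R Subtype.val

noncomputable def DL (R : Type) [CommRing R] (m : ℕ) : (List ℕ →₀ R) →ₗ[R] (List ℕ →₀ R) :=
  Finsupp.lsum R fun l => LinearMap.toSpanSingleton R _ (dList R m l)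

noncomputable def rL (R : Type) [CommRing R] (ℓ : ℤ) (m k : ℕ) :
    (List ℕ →₀ R) →ₗ[R] OPMod R ℓ m k :=
  Finsupp.lcomapDomain Subtype.val Subtype.val_injective

/-- The differential of the complex `OP_*(ℓ,m)`: merge adjacent entries with alternating
signs `(-1)^i`, dropping any term in which the merged entry is `≥ m`. -/
noncomputable def dOP (R : Type) [CommRing R] (ℓ : ℤ) (m k : ℕ) :
    OPMod R ℓ m (k + 1) →ₗ[R] OPMod R ℓ m k :=
  (rL R ℓ m k) ∘ₗ (DL R m) ∘ₗ (eL R ℓ m (k + 1))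

/-- The outgoing differential from degree `k` (zero in degree `0`). -/
noncomputable def dOPOut (R : Type) [CommRing R] (ℓ : ℤ) (m : ℕ) :
    (k : ℕ) → OPMod R ℓ m k →ₗ[R] OPMod R ℓ m (k - 1)
  | 0 => 0
  | (k + 1) => dOP R ℓ m k

/-- Homology of the complex `OP_*(ℓ,m)` in degree `k`. -/
noncomputable abbrev OPH (R : Type) [CommRing R] (ℓ : ℤ) (m k : ℕ) :=
  letI : HasQuotient (LinearMap.ker (dOPOut R ℓ m k))
      (Submodule R (LinearMap.ker (dOPOut R ℓ m k))) :=
      Submodule.hasQuotient (R := R) (M := LinearMap.ker (dOPOut R ℓ m k))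
  LinearMap.ker (dOPOut R ℓ m k) ⧸
    (LinearMap.range (dOPOut R ℓ m (k + 1))).comap (LinearMap.ker (dOPOut R ℓ m k)).subtype

/-- The chain map `φ : OP_{*-2}(ℓ-m,m) → OP_*(ℓ,m)`, prepending `(1, m-1)`. -/
noncomputable def phiOP (R : Type) [CommRing R] (ℓ : ℤ) (m : ℕ) (hm : 2 ≤ m) (k : ℕ) :
    OPMod R (ℓ - m) m k →ₗ[R] OPMod R ℓ m (k + 2) :=
  Finsupp.lmapDomain R R fun b =>
    ⟨1 :: (m - 1) :: b.1, by
      obtain ⟨h1, h2, h3⟩ := b.2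
      refine ⟨by simpa using h1, ?_, ?_⟩
      · simp only [List.sum_cons]
        omega
      · intro y hy
        simp only [List.mem_cons] at hy
        rcases hy with rfl | rfl | hy
        · omega
        · omega
        · exact h3 y hy⟩

/-- The alternating list `(1, m-1, 1, m-1, ...)` with `2i` entries. -/
def altL (m : ℕ) : ℕ → List ℕ
  | 0 => []
  | i + 1 => 1 :: (m - 1) :: altL m i

/-- The alternating list `(m-1, 1, m-1, 1, ...)` with `2i` entries. -/
def altL' (m : ℕ) : ℕ → List ℕ
  | 0 => []
  | i + 1 => (m - 1) :: 1 :: altL' m i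


lemma dList_prepend (R : Type) [CommRing R] (m : ℕ) (hm : 2 ≤ m) (a : ℕ) (ha : 1 ≤ a)
    (t : List ℕ) :
    dList R m (1 :: (m - 1) :: a :: t)
      = Finsupp.mapDomain (fun l => 1 :: (m - 1) :: l) (dList R m (a :: t)) := by
  rw [dList, dList, if_neg (by omega), if_neg (by omega), zero_sub, zero_sub]
  rw [show Finsupp.mapDomain (α := List ℕ) (M := R) (List.cons 1)
        (-(Finsupp.mapDomain (List.cons (m-1)) (dList R m (a :: t))))
      = -(Finsupp.mapDomain (List.cons 1)
          (Finsupp.mapDomain (List.cons (m-1)) (dList R m (a :: t))))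
    from map_neg (Finsupp.lmapDomain R R _) _]
  rw [neg_neg, ← Finsupp.mapDomain_comp]
  rfl

lemma rL_mapDomain (R : Type) [CommRing R] (ℓ : ℤ) (m : ℕ) (hm : 2 ≤ m) (k : ℕ)
    (F : OPb (ℓ - m) m k → OPb ℓ m (k + 2)) (hF : ∀ b, (F b).1 = 1 :: (m - 1) :: b.1)
    (v : List ℕ →₀ R) :
    rL R ℓ m (k + 2) (Finsupp.mapDomain (fun l => 1 :: (m - 1) :: l) v)
      = Finsupp.mapDomain F (rL R (ℓ - m) m k v) := by
  have hg : Function.Injective (fun l : List ℕ => 1 :: (m - 1) :: l) := by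
    intro x y h; simpa using h
  have hFinj : Function.Injective F := by
    intro x y h
    apply Subtype.ext
    have h2 := congrArg Subtype.val h
    rw [hF, hF] at h2; simpa using h2
  ext p
  by_cases hp : ∃ l, p.1 = 1 :: (m - 1) :: l
  · obtain ⟨l, hl⟩ := hp
    obtain ⟨hlen, hsum, hmem⟩ := p.2
    rw [hl] at hlen hsum hmem
    have hq : l.length = k ∧ (l.sum : ℤ) = ℓ - m ∧ ∀ x ∈ l, 1 ≤ x ∧ x < m := by
      refine ⟨by simpa using hlen, ?_, fun x hx => hmem x (by simp [hx])⟩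
      simp only [List.sum_cons] at hsum
      push_cast [Nat.cast_sub (by omega : 1 ≤ m)] at hsum ⊢
      omega
    set q : OPb (ℓ - m) m k := ⟨l, hq⟩ with hqdef
    have hFq : F q = p := Subtype.ext (by rw [hF]; exact hl.symm)
    rw [← hFq, Finsupp.mapDomain_apply hFinj]
    have : (rL R ℓ m (k + 2) (Finsupp.mapDomain (fun l => 1 :: (m - 1) :: l) v)) (F q)
        = (Finsupp.mapDomain (fun l => 1 :: (m - 1) :: l) v) (F q).1 := rfl
    rw [this, hFq, hl, show (1 :: (m - 1) :: l) = (fun l => 1 :: (m - 1) :: l) l from rfl,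
      Finsupp.mapDomain_apply hg]
    rfl
  · have h1 : (rL R ℓ m (k + 2) (Finsupp.mapDomain (fun l => 1 :: (m - 1) :: l) v)) p
        = (Finsupp.mapDomain (fun l => 1 :: (m - 1) :: l) v) p.1 := rfl
    rw [h1, Finsupp.mapDomain_notin_range _ _ (by
      rintro ⟨l, hl⟩; exact hp ⟨l, hl.symm⟩)]
    rw [Finsupp.mapDomain_notin_range _ _ (by
      rintro ⟨q, hq⟩
      exact hp ⟨q.1, by rw [← hq, hF]⟩)]

/-- for `m ≥ 2` and `ℓ ≥ 2`, the map
`φ(a₁,...,a_k) = (1, m-1, a₁, ..., a_k)` is a chain map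
`OP_{*-2}(ℓ-m, m) → OP_*(ℓ, m)`. -/
theorem phiOP_chainMap (R : Type) [CommRing R] (ℓ : ℤ) (m : ℕ) (hm : 2 ≤ m) (hℓ : 2 ≤ ℓ)
    (k : ℕ) (c : OPMod R (ℓ - m) m (k + 1)) :
    dOP R ℓ m (k + 2) (phiOP R ℓ m hm (k + 1) c) =
      phiOP R ℓ m hm k (dOP R (ℓ - m) m k c) := by
    induction c using Finsupp.induction_linear with
  | zero => simp
  | add f g hf hg => simp [map_add, hf, hg]
  | single b r =>
    obtain ⟨l, hlen, hsum, hmem⟩ := b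
    match l, hlen with
    | a :: t, hlen =>
    have ha : 1 ≤ a := (hmem a (by simp)).1
    simp only [dOP, phiOP, LinearMap.comp_apply, Finsupp.lmapDomain_apply,
      Finsupp.mapDomain_single, eL]
    have hDL : ∀ (x : List ℕ) (r : R), (DL R m) (Finsupp.single x r) = r • dList R m x :=
      fun x r => by simp [DL, Finsupp.lsum_single, LinearMap.toSpanSingleton_apply]
    erw [Finsupp.lmapDomain_apply, Finsupp.lmapDomain_apply, Finsupp.mapDomain_single, Finsupp.lmapDomain_apply, Finsupp.mapDomain_single]
    erw [Finsupp.lmapDomain_apply (α := {l : List ℕ // l.length = k + 1 ∧ (l.sum : ℤ) = ℓ - m ∧ ∀ x ∈ l, 1 ≤ x ∧ x < m}), Finsupp.mapDomain_single]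
    rw [hDL, hDL]
    simp only [map_smul, Finsupp.mapDomain_smul]
    erw [Finsupp.mapDomain_smul]
    congr 1
    rw [dList_prepend R m hm a ha t]
    refine rL_mapDomain R ℓ m hm k _ (fun b => ?_) _
    rfl
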